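/- For all real numbers x, y, k with k > 0, one has √(x² + k)·√(y² + k) ≥ x·y + k, with equality if and only if x = y. -/
import Mathlib

theorem stmt_2 (x y k : ℝ) (hk : 0 < k) :
    x * y + k ≤ Real.sqrt (x ^ 2 + k) * Real.sqrt (y ^ 2 + k) ∧
      (Real.sqrt (x ^ 2 + k) * Real.sqrt (y ^ 2 + k) = x * y + k ↔ x = y) := by
  have hx : (0:ℝ) ≤ x ^ 2 + k := by positivity
  have hy : (0:ℝ) ≤ y ^ 2 + k := by positivity
  have hAB : (0:ℝ) ≤ Real.sqrt (x ^ 2 + k) * Real.sqrt (y ^ 2 + k) := by positivity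
  have hsq : (Real.sqrt (x ^ 2 + k) * Real.sqrt (y ^ 2 + k)) ^ 2
      = (x * y + k) ^ 2 + k * (x - y) ^ 2 := by
    rw [mul_pow, Real.sq_sqrt hx, Real.sq_sqrt hy]; ring
  have hle : x * y + k ≤ Real.sqrt (x ^ 2 + k) * Real.sqrt (y ^ 2 + k) := by
    nlinarith [sq_nonneg (x - y), sq_nonneg (Real.sqrt (x ^ 2 + k) * Real.sqrt (y ^ 2 + k) + (x * y + k))]
  refine ⟨hle, ⟨fun h => ?_, fun h => ?_⟩⟩
  · rw [h] at hsq
    have h0 : (x - y) ^ 2 = 0 := by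
      have := sq_nonneg (x - y)
      nlinarith
    have := pow_eq_zero_iff (n := 2) (by norm_num) |>.mp h0
    linarith [sub_eq_zero.mp this]
  · subst h
    rw [Real.mul_self_sqrt hx]; ring
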